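/- For every n ≥ 1 and every function f : {0,1}^n → ℝ, ‖ℒ⁻f‖₂² ≥ 𝔈⁻(f). (This is the lower bound λ⁻(H_n) ≥ 1 on the dynamical spectral gap of the directed hypercube.) -/

import Mathlib

open Finset

/-- Flip the `i`-th bit of `x`. -/
def bflip {n : ℕ} (x : Fin n → Bool) (i : Fin n) : Fin n → Bool := Function.update x i (!x i)

/-- Set the `i`-th bit of `x` to `b`. -/
def bset {n : ℕ} (x : Fin n → Bool) (i : Fin n) (b : Bool) : Fin n → Bool := Function.update x i b

/-- Density of `A` under the uniform measure on the hypercube. -/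
noncomputable def mu {n : ℕ} (A : Finset (Fin n → Bool)) : ℝ := (A.card : ℝ) / 2 ^ n

/-- Expectation of `f` under the uniform measure on `A`. -/
noncomputable def expA {n : ℕ} (A : Finset (Fin n → Bool)) (f : (Fin n → Bool) → ℝ) : ℝ :=
  (∑ x ∈ A, f x) / (A.card : ℝ)

/-- Variance of `f` under the uniform measure on `A`. -/
noncomputable def varA {n : ℕ} (A : Finset (Fin n → Bool)) (f : (Fin n → Bool) → ℝ) : ℝ :=
  expA A (fun x => (f x - expA A f) ^ 2)

/-- Covariance of `f` and `g` under the uniform measure on `A`. -/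
noncomputable def covA {n : ℕ} (A : Finset (Fin n → Bool)) (f g : (Fin n → Bool) → ℝ) : ℝ :=
  expA A (fun x => (f x - expA A f) * (g x - expA A g))

/-- Dirichlet form of `f` on the subgraph of the hypercube induced by `A`. -/
noncomputable def dirA {n : ℕ} (A : Finset (Fin n → Bool)) (f : (Fin n → Bool) → ℝ) : ℝ :=
  (1 / 4) * expA A (fun x => ∑ i, (f x - f (bflip x i)) ^ 2 * (if bflip x i ∈ A then (1 : ℝ) else 0))

/-- Expectation of `f` under the uniform measure on the whole hypercube. -/
noncomputable def expC {n : ℕ} (f : (Fin n → Bool) → ℝ) : ℝ := (∑ x, f x) / 2 ^ n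

/-- The upward boundary (directed Dirichlet energy) `𝔈⁻(f)`. -/
noncomputable def energyMinus {n : ℕ} (f : (Fin n → Bool) → ℝ) : ℝ :=
  (1 / 4) * expC (fun x => ∑ i, (min 0 (f (bset x i true) - f (bset x i false))) ^ 2)

/-- The `L²`-distance of `f` to monotone functions on the hypercube. -/
noncomputable def dist2mono {n : ℕ} (f : (Fin n → Bool) → ℝ) : ℝ :=
  ⨅ g : {g : (Fin n → Bool) → ℝ // Monotone g}, Real.sqrt (expC fun x => (f x - g.1 x) ^ 2)

/-- `f` is monotone increasing on the poset `A`. -/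
def MonoIncrOn {n : ℕ} (A : Finset (Fin n → Bool)) (f : (Fin n → Bool) → ℝ) : Prop :=
  ∀ x ∈ A, ∀ y ∈ A, x ≤ y → f x ≤ f y

/-- `f` is non-constant on `A`. -/
def NonconstOn {n : ℕ} (A : Finset (Fin n → Bool)) (f : (Fin n → Bool) → ℝ) : Prop :=
  ∃ x ∈ A, ∃ y ∈ A, f x ≠ f y

/-- The approximate FKG ratio `δ(A)`. -/
noncomputable def fkgRatio {n : ℕ} (A : Finset (Fin n → Bool)) : ℝ :=
  min 0 (sInf {r : ℝ | ∃ f g : (Fin n → Bool) → ℝ, MonoIncrOn A f ∧ MonoIncrOn A g ∧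
    NonconstOn A f ∧ NonconstOn A g ∧ r = covA A f g / Real.sqrt (varA A f * varA A g)})

/-- The extension operator `T`. -/
noncomputable def extT {n : ℕ} (A : Finset (Fin n → Bool)) (hA : A.Nonempty)
    (f : (Fin n → Bool) → ℝ) : (Fin n → Bool) → ℝ :=
  fun x => if x ∈ A then f x else A.inf' hA f

/-- The coordinate component `ℒ^{(i)}` of the directed Laplacian. -/
noncomputable def lapI {n : ℕ} (f : (Fin n → Bool) → ℝ) (i : Fin n) (x : Fin n → Bool) : ℝ :=
  (1 / 2) * (f (bflip x i) - f x) * (if f (bset x i true) < f (bset x i false) then (1 : ℝ) else 0)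

/-- The directed Laplacian `ℒ⁻`. -/
noncomputable def lapMinus {n : ℕ} (f : (Fin n → Bool) → ℝ) (x : Fin n → Bool) : ℝ :=
  ∑ i, lapI f i x

/- ### Auxiliary lemmas for stmt_15 -/

lemma key_min (a b c d : ℝ) :
    0 ≤ (min 0 (b - a) - min 0 (d - c)) * (min 0 (c - a) - min 0 (d - b)) := by
  rcases lt_trichotomy (min 0 (b - a)) (min 0 (d - c)) with h | h | h
  · have hbd : b - a < d - c := by
      by_contra hc; push_neg at hc
      exact absurd (min_le_min le_rfl hc) (not_le.mpr h)
    have h2 : c - a ≤ d - b := by linarith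
    have h3 := min_le_min (le_refl (0 : ℝ)) h2
    nlinarith
  · rw [h]; simp
  · apply mul_nonneg
    · linarith
    · have hbd : d - c < b - a := by
        by_contra hc; push_neg at hc
        exact absurd (min_le_min le_rfl hc) (not_le.mpr h)
      have h2 : d - b ≤ c - a := by linarith
      have := min_le_min (le_refl (0 : ℝ)) h2
      linarith

lemma ind1 (u v : ℝ) :
    1 / 2 * (u - v) * (if u < v then (1 : ℝ) else 0) = 1 / 2 * min 0 (u - v) := by
  split_ifs with h
  · rw [min_eq_right (by linarith : u - v ≤ 0)]; ring
  · rw [min_eq_left (by linarith [not_lt.mp h] : (0 : ℝ) ≤ u - v)]; ring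

lemma ind2 (u v : ℝ) :
    1 / 2 * (v - u) * (if u < v then (1 : ℝ) else 0) = -(1 / 2 * min 0 (u - v)) := by
  split_ifs with h
  · rw [min_eq_right (by linarith : u - v ≤ 0)]; ring
  · rw [min_eq_left (by linarith [not_lt.mp h] : (0 : ℝ) ≤ u - v)]; ring

lemma sq_ind (u v : ℝ) :
    (1 / 2 * (u - v) * (if u < v then (1 : ℝ) else 0)) ^ 2 = 1 / 4 * (min 0 (u - v)) ^ 2 := by
  split_ifs with h
  · rw [min_eq_right (by linarith : u - v ≤ 0)]; ring
  · rw [min_eq_left (by linarith [not_lt.mp h] : (0 : ℝ) ≤ u - v)]; ring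

lemma sq_ind' (u v : ℝ) :
    (1 / 2 * (v - u) * (if u < v then (1 : ℝ) else 0)) ^ 2 = 1 / 4 * (min 0 (u - v)) ^ 2 := by
  split_ifs with h
  · rw [min_eq_right (by linarith : u - v ≤ 0)]; ring
  · rw [min_eq_left (by linarith [not_lt.mp h] : (0 : ℝ) ≤ u - v)]; ring

lemma flip_invol {n : ℕ} (k : Fin n) :
    Function.Involutive (fun x : Fin n → Bool => bflip x k) := by
  intro x
  simp [bflip, Function.update_idem]

lemma bflip_bflip {n : ℕ} (k : Fin n) (x : Fin n → Bool) : bflip (bflip x k) k = x :=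
  flip_invol k x

lemma sum_flip {n : ℕ} (k : Fin n) (g : (Fin n → Bool) → ℝ) :
    ∑ x, g (bflip x k) = ∑ x, g x :=
  Fintype.sum_equiv ((flip_invol k).toPerm _) _ _ (fun _ => rfl)

lemma lapI_flip {n : ℕ} (f : (Fin n → Bool) → ℝ) (k : Fin n) (x : Fin n → Bool) :
    lapI f k (bflip x k) = - lapI f k x := by
  have h1 : bflip (bflip x k) k = x := bflip_bflip k x
  have h2 : ∀ b, bset (bflip x k) k b = bset x k b := by
    intro b; simp [bset, bflip, Function.update_idem]
  simp only [lapI, h1, h2]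
  ring

lemma bflip_comm {n : ℕ} {i j : Fin n} (hij : i ≠ j) (x : Fin n → Bool) :
    bflip (bflip x j) i = bflip (bflip x i) j := by
  simp only [bflip, Function.update_of_ne hij, Function.update_of_ne hij.symm]
  exact Function.update_comm hij.symm _ _ _

lemma diag_pt {n : ℕ} (f : (Fin n → Bool) → ℝ) (i : Fin n) (x : Fin n → Bool) :
    (lapI f i x) ^ 2 = 1 / 4 * (min 0 (f (bset x i true) - f (bset x i false))) ^ 2 := by
  have hfb : bflip x i = bset x i (!x i) := rfl
  have hfx : f x = f (bset x i (x i)) := by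
    rw [bset, Function.update_eq_self]
  simp only [lapI, hfb, hfx]
  rcases Bool.dichotomy (x i) with hxi | hxi <;>
    simp only [hxi, Bool.not_false, Bool.not_true]
  · exact sq_ind (f (bset x i true)) (f (bset x i false))
  · exact sq_ind' (f (bset x i true)) (f (bset x i false))

lemma cross_pt {n : ℕ} (f : (Fin n → Bool) → ℝ) {i j : Fin n} (hij : i ≠ j)
    (x : Fin n → Bool) :
    0 ≤ (lapI f i x - lapI f i (bflip x j)) * (lapI f j x - lapI f j (bflip x i)) := by
  have hb : ∀ b : Bool,
      Function.update (Function.update x i b) j (x j) = Function.update x i b := by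
    intro b
    rw [show x j = Function.update x i b j from (Function.update_of_ne hij.symm b x).symm,
      Function.update_eq_self]
  have e0 : f x = f (Function.update (Function.update x i (x i)) j (x j)) := by
    rw [Function.update_eq_self, Function.update_eq_self]
  have eA : ∀ b, f (Function.update x i b)
      = f (Function.update (Function.update x i b) j (x j)) := fun b => by rw [hb]
  have eB : ∀ c, f (Function.update x j c)
      = f (Function.update (Function.update x i (x i)) j c) := by
    intro c; rw [Function.update_eq_self]
  have eC : ∀ b c, f (Function.update (Function.update x j c) i b)
      = f (Function.update (Function.update x i b) j c) := fun b c => by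
    rw [Function.update_comm hij.symm]
  simp only [lapI, bflip, bset, Function.update_of_ne hij, Function.update_of_ne hij.symm]
  simp only [e0, eA, eB, eC]
  rcases Bool.dichotomy (x i) with hxi | hxi <;>
    rcases Bool.dichotomy (x j) with hxj | hxj <;>
      simp only [hxi, hxj, Bool.not_false, Bool.not_true] <;>
        simp only [ind1, ind2] <;>
          nlinarith [key_min (f (Function.update (Function.update x i false) j false))
            (f (Function.update (Function.update x i true) j false))
            (f (Function.update (Function.update x i false) j true))
            (f (Function.update (Function.update x i true) j true))]

lemma cross_nonneg {n : ℕ} (f : (Fin n → Bool) → ℝ) {i j : Fin n} (hij : i ≠ j) :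
    0 ≤ ∑ x, lapI f i x * lapI f j x := by
  have h1 : ∑ x, lapI f i x * lapI f j (bflip x i) = - ∑ x, lapI f i x * lapI f j x := by
    calc ∑ x, lapI f i x * lapI f j (bflip x i)
        = ∑ x, lapI f i (bflip x i) * lapI f j (bflip (bflip x i) i) :=
          (sum_flip i fun x => lapI f i x * lapI f j (bflip x i)).symm
      _ = ∑ x, -(lapI f i x * lapI f j x) :=
          Finset.sum_congr rfl fun x _ => by rw [bflip_bflip i x, lapI_flip]; ring
      _ = - ∑ x, lapI f i x * lapI f j x := Finset.sum_neg_distrib _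
  have h2 : ∑ x, lapI f i (bflip x j) * lapI f j x = - ∑ x, lapI f i x * lapI f j x := by
    calc ∑ x, lapI f i (bflip x j) * lapI f j x
        = ∑ x, lapI f i (bflip (bflip x j) j) * lapI f j (bflip x j) :=
          (sum_flip j fun x => lapI f i (bflip x j) * lapI f j x).symm
      _ = ∑ x, -(lapI f i x * lapI f j x) :=
          Finset.sum_congr rfl fun x _ => by rw [bflip_bflip j x, lapI_flip]; ring
      _ = - ∑ x, lapI f i x * lapI f j x := Finset.sum_neg_distrib _
  have h3 : ∑ x, lapI f i (bflip x j) * lapI f j (bflip x i)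
      = ∑ x, lapI f i x * lapI f j x := by
    calc ∑ x, lapI f i (bflip x j) * lapI f j (bflip x i)
        = ∑ x, lapI f i (bflip (bflip x j) j) * lapI f j (bflip (bflip x j) i) :=
          (sum_flip j fun x => lapI f i (bflip x j) * lapI f j (bflip x i)).symm
      _ = ∑ x, lapI f i x * lapI f j (bflip (bflip x i) j) :=
          Finset.sum_congr rfl fun x _ => by rw [bflip_bflip j x, bflip_comm hij]
      _ = ∑ x, lapI f i (bflip x i) * lapI f j (bflip (bflip (bflip x i) i) j) :=
          (sum_flip i fun x => lapI f i x * lapI f j (bflip (bflip x i) j)).symm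
      _ = ∑ x, lapI f i x * lapI f j x :=
          Finset.sum_congr rfl fun x _ => by rw [bflip_bflip i x, lapI_flip, lapI_flip]; ring
  have hT : 0 ≤ ∑ x, (lapI f i x - lapI f i (bflip x j)) * (lapI f j x - lapI f j (bflip x i)) :=
    Finset.sum_nonneg fun x _ => cross_pt f hij x
  have hexp : ∑ x, (lapI f i x - lapI f i (bflip x j)) * (lapI f j x - lapI f j (bflip x i))
      = 4 * ∑ x, lapI f i x * lapI f j x := by
    have hpt : ∀ x : Fin n → Bool,
        (lapI f i x - lapI f i (bflip x j)) * (lapI f j x - lapI f j (bflip x i))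
        = lapI f i x * lapI f j x - lapI f i x * lapI f j (bflip x i)
          - lapI f i (bflip x j) * lapI f j x
          + lapI f i (bflip x j) * lapI f j (bflip x i) := fun x => by ring
    rw [Finset.sum_congr rfl fun x _ => hpt x, Finset.sum_add_distrib,
      Finset.sum_sub_distrib, Finset.sum_sub_distrib, h1, h2, h3]
    ring
  linarith

/-- lower bound `λ⁻(H_n) ≥ 1`: `‖ℒ⁻f‖₂² ≥ 𝔈⁻(f)`. -/
theorem stmt_15 (n : ℕ) (hn : 1 ≤ n) (f : (Fin n → Bool) → ℝ) :
    expC (fun x => lapMinus f x ^ 2) ≥ energyMinus f := by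
  classical
  have hp : (0 : ℝ) < 2 ^ n := by positivity
  simp only [ge_iff_le, energyMinus, expC, lapMinus]
  rw [← mul_div_assoc, div_le_div_iff₀ hp hp]
  apply mul_le_mul_of_nonneg_right _ hp.le
  have e1 : 1 / 4 * (∑ x, ∑ i, (min 0 (f (bset x i true) - f (bset x i false))) ^ 2)
      = ∑ x, ∑ i, (lapI f i x) ^ 2 := by
    rw [Finset.mul_sum]
    refine Finset.sum_congr rfl fun x _ => ?_
    rw [Finset.mul_sum]
    exact Finset.sum_congr rfl fun i _ => (diag_pt f i x).symm
  have e2 : ∑ x, (∑ i, lapI f i x) ^ 2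
      = ∑ i : Fin n, ∑ j : Fin n, ∑ x, lapI f i x * lapI f j x := by
    have hx : ∀ x : Fin n → Bool,
        (∑ i, lapI f i x) ^ 2 = ∑ i, ∑ j, lapI f i x * lapI f j x := by
      intro x; rw [sq, Finset.sum_mul_sum]
    rw [Finset.sum_congr rfl fun x _ => hx x, Finset.sum_comm]
    exact Finset.sum_congr rfl fun i _ => Finset.sum_comm
  rw [e1, e2, Finset.sum_comm]
  refine Finset.sum_le_sum fun i _ => ?_
  have herase := Finset.add_sum_erase Finset.univ
    (fun j => ∑ x, lapI f i x * lapI f j x) (Finset.mem_univ i)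
  have h0 : 0 ≤ ∑ j ∈ Finset.univ.erase i, ∑ x, lapI f i x * lapI f j x :=
    Finset.sum_nonneg fun j hj => cross_nonneg f (Finset.ne_of_mem_erase hj).symm
  have hsq : ∑ x, (lapI f i x) ^ 2 = ∑ x, lapI f i x * lapI f i x := by
    exact Finset.sum_congr rfl fun x _ => sq (lapI f i x) ▸ rfl
  rw [hsq]
  linarith
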